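/- Let m < n be positive integers and let φ_1,…,φ_n be unit-norm vectors in ℝ^m with synthesis operator Φ (the m×n matrix whose columns are the φ_i). Then max_{i≠j} |⟨φ_i, φ_j⟩| = sqrt((n−m)/(m(n−1))) if and only if ΦΦᵀ = (n/m)·I and |⟨φ_i, φ_j⟩| is constant over all pairs i ≠ j (i.e., the vectors form an equiangular tight frame). -/

import Mathlib

open Matrix Finset

lemma welch_sum_split {α β : Type*} [Fintype α] [DecidableEq α] [AddCommMonoid β]
    (f : α → α → β) :
    ∑ i, ∑ j, f i j = (∑ i, f i i) + ∑ p ∈ Finset.univ.offDiag, f p.1 p.2 := by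
  rw [← Finset.sum_product']
  rw [← Finset.diag_union_offDiag (Finset.univ : Finset α),
    Finset.sum_union (Finset.disjoint_diag_offDiag _)]
  congr 1
  apply Finset.sum_nbij' (fun p => p.1) (fun i => (i, i)) <;> simp +contextual [Finset.mem_diag]

lemma welch_trace_sq {k : ℕ} (T : Matrix (Fin k) (Fin k) ℝ) (hT : Tᵀ = T) :
    (T * T).trace = ∑ i, ∑ j, (T i j) ^ 2 := by
  have hsymm : ∀ i j, T j i = T i j := fun i j => by
    conv_lhs => rw [← hT, Matrix.transpose_apply]
  simp [Matrix.trace, Matrix.diag, Matrix.mul_apply, sq]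
  exact Finset.sum_congr rfl fun i _ => Finset.sum_congr rfl fun j _ => by rw [hsymm]

lemma welch_key {k : ℕ} (T : Matrix (Fin k) (Fin k) ℝ) (hT : Tᵀ = T) (a : ℝ) :
    ∑ i, ∑ j, ((T - a • (1 : Matrix (Fin k) (Fin k) ℝ)) i j) ^ 2
      = (T * T).trace - 2 * a * T.trace + a ^ 2 * k := by
  have expand : ∀ i j, ((T - a • (1 : Matrix (Fin k) (Fin k) ℝ)) i j) ^ 2
      = (T i j) ^ 2 - 2 * a * (if i = j then T i j else 0)
        + a ^ 2 * (if i = j then 1 else 0) := by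
    intro i j
    simp only [Matrix.sub_apply, Matrix.smul_apply, Matrix.one_apply, smul_eq_mul]
    split <;> ring
  rw [welch_trace_sq T hT]
  simp_rw [expand, Finset.sum_add_distrib, Finset.sum_sub_distrib, ← Finset.mul_sum,
    Finset.sum_ite_eq, Finset.mem_univ, if_true]
  simp [Matrix.trace, Matrix.diag, Finset.mul_sum, mul_comm]

theorem welch_equality_iff_ETF (m n : ℕ) (hm : 0 < m) (hmn : m < n)
    (Φ : Matrix (Fin m) (Fin n) ℝ)
    (hunit : ∀ i, (Φᵀ * Φ) i i = 1) :
    IsGreatest {x : ℝ | ∃ i j : Fin n, i ≠ j ∧ x = |(Φᵀ * Φ) i j|}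
        (Real.sqrt (((n : ℝ) - m) / (m * ((n : ℝ) - 1)))) ↔
      (Φ * Φᵀ = ((n : ℝ) / m) • 1 ∧
        ∃ c : ℝ, ∀ i j : Fin n, i ≠ j → |(Φᵀ * Φ) i j| = c) := by
  have hM : (0 : ℝ) < m := by exact_mod_cast hm
  have hMN : (m : ℝ) < n := by exact_mod_cast hmn
  have hn2 : 2 ≤ n := by omega
  have hN1 : (0 : ℝ) < (n : ℝ) - 1 := by
    have : (1 : ℝ) < n := by exact_mod_cast (by omega : 1 < n)
    linarith
  set r : ℝ := ((n : ℝ) - m) / (m * ((n : ℝ) - 1)) with hr_def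
  have hr : 0 ≤ r := div_nonneg (by linarith) (by positivity)
  set w : ℝ := Real.sqrt r with hw_def
  have hw2 : w ^ 2 = r := Real.sq_sqrt hr
  have hw0 : 0 ≤ w := Real.sqrt_nonneg r
  have hTsym : (Φ * Φᵀ)ᵀ = Φ * Φᵀ := by rw [Matrix.transpose_mul, Matrix.transpose_transpose]
  have hGsym : (Φᵀ * Φ)ᵀ = Φᵀ * Φ := by rw [Matrix.transpose_mul, Matrix.transpose_transpose]
  have htrT : (Φ * Φᵀ).trace = n := by
    rw [Matrix.trace_mul_comm]
    simp [Matrix.trace, Matrix.diag, hunit]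
  have htrTT : ((Φ * Φᵀ) * (Φ * Φᵀ)).trace = ((Φᵀ * Φ) * (Φᵀ * Φ)).trace := by
    rw [Matrix.mul_assoc, Matrix.trace_mul_comm, ← Matrix.mul_assoc, Matrix.mul_assoc]
  set S : ℝ := ∑ p ∈ (Finset.univ : Finset (Fin n)).offDiag, ((Φᵀ * Φ) p.1 p.2) ^ 2 with hS_def
  have hSsum : ((Φ * Φᵀ) * (Φ * Φᵀ)).trace = n + S := by
    rw [htrTT, welch_trace_sq _ hGsym, welch_sum_split (fun i j => ((Φᵀ * Φ) i j) ^ 2)]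
    simp [hunit, hS_def]
  have hkey : ∑ i, ∑ j, ((Φ * Φᵀ - ((n : ℝ) / m) • (1 : Matrix (Fin m) (Fin m) ℝ)) i j) ^ 2
      = S - ((n : ℝ) ^ 2 / m - n) := by
    rw [welch_key _ hTsym, htrT, hSsum]
    field_simp
    ring
  have hcard : (((Finset.univ : Finset (Fin n)).offDiag.card : ℝ)) = (n : ℝ) ^ 2 - n := by
    have h1 : n ≤ n * n := Nat.le_mul_of_pos_left n (by omega)
    rw [Finset.offDiag_card, Finset.card_univ, Fintype.card_fin, Nat.cast_sub h1]
    push_cast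
    ring
  have he : ((n : ℝ) ^ 2 - n) * r = (n : ℝ) ^ 2 / m - n := by
    rw [hr_def]
    field_simp
  have hDnonneg : 0 ≤ ∑ i, ∑ j, ((Φ * Φᵀ - ((n : ℝ) / m) • (1 : Matrix (Fin m) (Fin m) ℝ)) i j) ^ 2 :=
    Finset.sum_nonneg fun i _ => Finset.sum_nonneg fun j _ => sq_nonneg _
  constructor
  · rintro ⟨⟨i0, j0, hij0, hwval⟩, hub⟩
    have hub' : ∀ i j : Fin n, i ≠ j → |(Φᵀ * Φ) i j| ≤ w := fun i j hij =>
      hub ⟨i, j, hij, rfl⟩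
    have hterm : ∀ p ∈ (Finset.univ : Finset (Fin n)).offDiag,
        ((Φᵀ * Φ) p.1 p.2) ^ 2 ≤ w ^ 2 := by
      intro p hp
      rw [Finset.mem_offDiag] at hp
      calc ((Φᵀ * Φ) p.1 p.2) ^ 2 = |(Φᵀ * Φ) p.1 p.2| ^ 2 := (sq_abs _).symm
        _ ≤ w ^ 2 := pow_le_pow_left₀ (abs_nonneg _) (hub' p.1 p.2 hp.2.2) 2
    have hSle : S ≤ (n : ℝ) ^ 2 / m - n := by
      calc S ≤ ∑ _p ∈ (Finset.univ : Finset (Fin n)).offDiag, w ^ 2 :=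
            Finset.sum_le_sum hterm
        _ = (((Finset.univ : Finset (Fin n)).offDiag.card : ℝ)) * w ^ 2 := by
            rw [Finset.sum_const, nsmul_eq_mul]
        _ = ((n : ℝ) ^ 2 - n) * r := by rw [hcard, hw2]
        _ = (n : ℝ) ^ 2 / m - n := he
    have hSeq : S = (n : ℝ) ^ 2 / m - n := le_antisymm hSle (by
      have := hDnonneg
      rw [hkey] at this
      linarith)
    constructor
    · -- tightness
      have hzero : ∑ i, ∑ j, ((Φ * Φᵀ - ((n : ℝ) / m) • (1 : Matrix (Fin m) (Fin m) ℝ)) i j) ^ 2 = 0 := by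
        rw [hkey, hSeq]; ring
      have hD0 : Φ * Φᵀ - ((n : ℝ) / m) • 1 = 0 := by
        ext i j
        have h1 := (Finset.sum_eq_zero_iff_of_nonneg
          (fun i _ => Finset.sum_nonneg fun j _ => sq_nonneg _)).mp hzero i (Finset.mem_univ i)
        have h2 := (Finset.sum_eq_zero_iff_of_nonneg
          (fun j _ => sq_nonneg _)).mp h1 j (Finset.mem_univ j)
        simpa using (pow_eq_zero_iff two_ne_zero).mp h2
      rw [← sub_eq_zero]
      exact hD0
    · -- equiangularity
      refine ⟨w, fun i j hij => ?_⟩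
      have hsum0 : ∑ p ∈ (Finset.univ : Finset (Fin n)).offDiag,
          (w ^ 2 - ((Φᵀ * Φ) p.1 p.2) ^ 2) = 0 := by
        rw [Finset.sum_sub_distrib, Finset.sum_const, nsmul_eq_mul, hcard, hw2, ← hS_def,
          hSeq, he]
        ring
      have hall := (Finset.sum_eq_zero_iff_of_nonneg
        (fun p hp => sub_nonneg.mpr (hterm p hp))).mp hsum0
      have hp : ((i, j) : Fin n × Fin n) ∈ (Finset.univ : Finset (Fin n)).offDiag := by
        rw [Finset.mem_offDiag]; exact ⟨Finset.mem_univ _, Finset.mem_univ _, hij⟩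
      have h2 : ((Φᵀ * Φ) i j) ^ 2 = r := by
        have := hall (i, j) hp
        simp at this
        rw [← hw2]; linarith
      rw [← Real.sqrt_sq_eq_abs, h2]
  · rintro ⟨htight, c, hc⟩
    have hij0 : (⟨0, by omega⟩ : Fin n) ≠ ⟨1, by omega⟩ := by
      intro h; simpa using congrArg Fin.val h
    have hc0 : 0 ≤ c := (hc _ _ hij0) ▸ abs_nonneg _
    have hzero : ∑ i, ∑ j, ((Φ * Φᵀ - ((n : ℝ) / m) • (1 : Matrix (Fin m) (Fin m) ℝ)) i j) ^ 2 = 0 := by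
      rw [htight]
      simp
    have hSeq : S = (n : ℝ) ^ 2 / m - n := by
      rw [hkey] at hzero; linarith
    have hSc : S = ((n : ℝ) ^ 2 - n) * c ^ 2 := by
      rw [hS_def]
      rw [Finset.sum_congr rfl (fun p hp => ?_), Finset.sum_const, nsmul_eq_mul, hcard]
      rw [Finset.mem_offDiag] at hp
      rw [← sq_abs, hc p.1 p.2 hp.2.2]
    have hc2 : c ^ 2 = r := by
      have hpos : (0 : ℝ) < (n : ℝ) ^ 2 - n := by nlinarith
      have : ((n : ℝ) ^ 2 - n) * c ^ 2 = ((n : ℝ) ^ 2 - n) * r := by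
        rw [← hSc, hSeq, he]
      exact mul_left_cancel₀ (ne_of_gt hpos) this
    have hcw : c = w := by
      rw [hw_def, ← hc2, Real.sqrt_sq hc0]
    constructor
    · exact ⟨⟨0, by omega⟩, ⟨1, by omega⟩, hij0, by rw [hc _ _ hij0, hcw]⟩
    · rintro x ⟨i, j, hij, rfl⟩
      rw [hc i j hij, hcw]
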